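/- arXiv:2601.15840 — 4 statements merged into one kernel-verified Lean document; each statement's English description precedes it below -/
import Mathlib

section
/- Let H be a finite-dimensional Hilbert space, A a unital C*-algebra, G a group acting on A via τ, and φ a C*-extreme point of the set UCP^{G_τ}(A, B(H)) of G-invariant unital completely positive maps. Then φ is a linear extreme point of UCP^{G_τ}(A, B(H)): whenever φ = λφ₁ + (1−λ)φ₂ with φ₁, φ₂ ∈ UCP^{G_τ}(A, B(H)) and λ ∈ (0,1), one has φ₁ = φ₂ = φ. -/
open scoped ComplexOrder

noncomputable section

variable {G : Type} [Group G]
variable {A : Type} [Ring A] [StarRing A] [Algebra ℂ A]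
variable {H : Type} [NormedAddCommGroup H] [InnerProductSpace ℂ H] [CompleteSpace H]

/-- Complete positivity of a linear map into `B(H)`. -/
def IsCPMap (φ : A →ₗ[ℂ] (H →L[ℂ] H)) : Prop :=
  ∀ (n : ℕ) (a : Fin n → A) (h : Fin n → H),
    0 ≤ ∑ i, ∑ j, (inner ℂ ((φ (star (a i) * a j)) (h j)) (h i) : ℂ)

/-- Unital completely positive map. -/
def IsUCPMap (φ : A →ₗ[ℂ] (H →L[ℂ] H)) : Prop :=
  IsCPMap φ ∧ φ 1 = 1

/-- `G`-invariance of a map with respect to an action `τ` of `G` on `A`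
by `*`-automorphisms. -/
def IsGInvariant (τ : G → (A ≃⋆ₐ[ℂ] A)) (φ : A →ₗ[ℂ] (H →L[ℂ] H)) : Prop :=
  ∀ (g : G) (a : A), φ (τ g a) = φ a

/-- The set `UCP^{G_τ}(A, B(H))` of `G`-invariant unital completely positive maps. -/
def UCPG (τ : G → (A ≃⋆ₐ[ℂ] A)) : Set (A →ₗ[ℂ] (H →L[ℂ] H)) :=
  {φ | IsUCPMap φ ∧ IsGInvariant τ φ}

/-- Unitary equivalence of maps into `B(H)`: `ψ = U* φ U`. -/
def UnitarilyEquiv (φ ψ : A →ₗ[ℂ] (H →L[ℂ] H)) : Prop :=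
  ∃ U ∈ unitary (H →L[ℂ] H), ∀ a, ψ a = star U * φ a * U

/-- `φ` is a C*-extreme point of `S`: every proper C*-convex decomposition of `φ`
into members of `S` has all components unitarily equivalent to `φ`. -/
def IsCStarExtreme (S : Set (A →ₗ[ℂ] (H →L[ℂ] H))) (φ : A →ₗ[ℂ] (H →L[ℂ] H)) : Prop :=
  φ ∈ S ∧ ∀ (n : ℕ) (ψ : Fin n → (A →ₗ[ℂ] (H →L[ℂ] H))) (T : Fin n → (H →L[ℂ] H)),
    (∀ i, ψ i ∈ S) → (∀ i, IsUnit (T i)) →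
    (∑ i, star (T i) * T i) = 1 →
    (∀ a, φ a = ∑ i, star (T i) * (ψ i a) * T i) →
    ∀ i, UnitarilyEquiv φ (ψ i)

section Aux

set_option linter.unusedSectionVars false

lemma aux_parseval {ι : Type} [Fintype ι] (b : OrthonormalBasis ι ℂ H) (v : H) :
    ∑ i, ‖(inner ℂ (b i) v : ℂ)‖^2 = ‖v‖^2 := by
  have h := b.repr.norm_map v
  rw [EuclideanSpace.norm_eq] at h
  rw [← h, Real.sq_sqrt (by positivity)]
  simp [b.repr_apply_apply]

lemma aux_hs_adjoint [FiniteDimensional ℂ H] {ι : Type} [Fintype ι] (b : OrthonormalBasis ι ℂ H)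
    (T : H →L[ℂ] H) :
    ∑ i, ‖T (b i)‖^2 = ∑ i, ‖ContinuousLinearMap.adjoint T (b i)‖^2 := by
  calc ∑ i, ‖T (b i)‖^2 = ∑ i, ∑ j, ‖(inner ℂ (b j) (T (b i)) : ℂ)‖^2 :=
        Finset.sum_congr rfl fun i _ => (aux_parseval b (T (b i))).symm
    _ = ∑ j, ∑ i, ‖(inner ℂ (b i) (ContinuousLinearMap.adjoint T (b j)) : ℂ)‖^2 := by
        rw [Finset.sum_comm]
        refine Finset.sum_congr rfl fun j _ => Finset.sum_congr rfl fun i _ => ?_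
        congr 1
        rw [← ContinuousLinearMap.adjoint_inner_left]
        exact norm_inner_symm _ _
    _ = ∑ j, ‖ContinuousLinearMap.adjoint T (b j)‖^2 :=
        Finset.sum_congr rfl fun j _ => aux_parseval b _

lemma aux_hs_conj [FiniteDimensional ℂ H] {ι : Type} [Fintype ι] (b : OrthonormalBasis ι ℂ H)
    (S U : H →L[ℂ] H) (hU : U ∈ unitary (H →L[ℂ] H)) :
    ∑ i, ‖(star U * S * U) (b i)‖^2 = ∑ i, ‖S (b i)‖^2 := by
  have hsU : star U ∈ unitary (H →L[ℂ] H) := Unitary.star_mem hU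
  calc ∑ i, ‖(star U * S * U) (b i)‖^2 = ∑ i, ‖(S * U) (b i)‖^2 := by
        refine Finset.sum_congr rfl fun i _ => ?_
        rw [mul_assoc]
        exact congrArg (· ^ 2) (ContinuousLinearMap.norm_map_of_mem_unitary hsU _)
    _ = ∑ i, ‖ContinuousLinearMap.adjoint (S * U) (b i)‖^2 := aux_hs_adjoint b _
    _ = ∑ i, ‖ContinuousLinearMap.adjoint S (b i)‖^2 := by
        refine Finset.sum_congr rfl fun i _ => ?_
        rw [← ContinuousLinearMap.star_eq_adjoint, star_mul]
        have h : (star U * star S) (b i) = (star U) ((star S) (b i)) := rfl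
        rw [h, ContinuousLinearMap.norm_map_of_mem_unitary hsU,
          ContinuousLinearMap.star_eq_adjoint]
    _ = ∑ i, ‖S (b i)‖^2 := (aux_hs_adjoint b S).symm

lemma aux_convex_forces_eq {E : Type} [NormedAddCommGroup E] [InnerProductSpace ℂ E]
    (x y₁ y₂ : E) (l : ℝ) (hl0 : 0 < l) (hl1 : l < 1)
    (h : x = (l:ℂ) • y₁ + ((1 - l : ℝ):ℂ) • y₂)
    (h1 : ‖y₁‖ = ‖x‖) (h2 : ‖y₂‖ = ‖x‖) : y₁ = x ∧ y₂ = x := by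
  have key : ‖x‖^2 = l * Complex.re (inner ℂ x y₁) + (1 - l) * Complex.re (inner ℂ x y₂) := by
    have heq : (inner ℂ x x : ℂ) = (l:ℂ) * inner ℂ x y₁ + ((1 - l:ℝ):ℂ) * inner ℂ x y₂ := by
      nth_rw 2 [h]
      rw [inner_add_right, inner_smul_right, inner_smul_right]
    have h2 := congrArg Complex.re heq
    rw [show ((inner ℂ x x : ℂ)).re = RCLike.re (inner ℂ x x : ℂ) from rfl,
      inner_self_eq_norm_sq] at h2
    simpa [Complex.add_re, Complex.re_ofReal_mul] using h2
  have b1 : Complex.re (inner ℂ x y₁ : ℂ) ≤ ‖x‖^2 := by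
    calc Complex.re (inner ℂ x y₁ : ℂ) ≤ ‖(inner ℂ x y₁ : ℂ)‖ := Complex.re_le_norm _
      _ ≤ ‖x‖ * ‖y₁‖ := norm_inner_le_norm x y₁
      _ = ‖x‖^2 := by rw [h1]; ring
  have b2 : Complex.re (inner ℂ x y₂ : ℂ) ≤ ‖x‖^2 := by
    calc Complex.re (inner ℂ x y₂ : ℂ) ≤ ‖(inner ℂ x y₂ : ℂ)‖ := Complex.re_le_norm _
      _ ≤ ‖x‖ * ‖y₂‖ := norm_inner_le_norm x y₂
      _ = ‖x‖^2 := by rw [h2]; ring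
  have e1 : Complex.re (inner ℂ x y₁ : ℂ) = ‖x‖^2 := by nlinarith
  have e2 : Complex.re (inner ℂ x y₂ : ℂ) = ‖x‖^2 := by nlinarith
  constructor
  · have hz : ‖x - y₁‖^2 = 0 := by
      rw [@norm_sub_sq ℂ, RCLike.re_to_complex, e1, h1]; ring
    have hs := sub_eq_zero.mp (norm_eq_zero.mp
      (by nlinarith [norm_nonneg (x - y₁), sq_nonneg ‖x - y₁‖] : ‖x - y₁‖ = 0))
    exact hs.symm
  · have hz : ‖x - y₂‖^2 = 0 := by
      rw [@norm_sub_sq ℂ, RCLike.re_to_complex, e2, h2]; ring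
    have hs := sub_eq_zero.mp (norm_eq_zero.mp
      (by nlinarith [norm_nonneg (x - y₂), sq_nonneg ‖x - y₂‖] : ‖x - y₂‖ = 0))
    exact hs.symm

end Aux

set_option maxHeartbeats 1600000 in
/-- on a finite-dimensional Hilbert space, every C*-extreme point of
`UCP^{G_τ}(A, B(H))` is a linear extreme point. -/
theorem cstarExtreme_is_linear_extreme [FiniteDimensional ℂ H]
    (τ : G → (A ≃⋆ₐ[ℂ] A)) (φ : A →ₗ[ℂ] (H →L[ℂ] H))
    (hφ : IsCStarExtreme (UCPG τ) φ) :
    ∀ φ₁ φ₂ : A →ₗ[ℂ] (H →L[ℂ] H), φ₁ ∈ UCPG τ → φ₂ ∈ UCPG τ →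
      ∀ l : ℝ, 0 < l → l < 1 →
      (∀ a : A, φ a = (l : ℂ) • φ₁ a + ((1 - l : ℝ) : ℂ) • φ₂ a) →
      φ₁ = φ ∧ φ₂ = φ := by
  intro φ₁ φ₂ hm1 hm2 l hl0 hl1 hdecomp
  -- set up the C*-convex decomposition
  set c₁ : ℂ := ((Real.sqrt l : ℝ) : ℂ) with hc₁
  set c₂ : ℂ := ((Real.sqrt (1 - l) : ℝ) : ℂ) with hc₂
  have hc₁0 : c₁ ≠ 0 := by
    simp [hc₁, Complex.ofReal_eq_zero, Real.sqrt_eq_zero', not_le, hl0]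
  have hc₂0 : c₂ ≠ 0 := by
    simp [hc₂, Complex.ofReal_eq_zero, Real.sqrt_eq_zero', not_le]
    linarith
  have hmul₁ : star c₁ * c₁ = (l : ℂ) := by
    show (starRingEnd ℂ) c₁ * c₁ = (l : ℂ)
    rw [hc₁, Complex.conj_ofReal, ← Complex.ofReal_mul, Real.mul_self_sqrt hl0.le]
  have hmul₂ : star c₂ * c₂ = ((1 - l : ℝ) : ℂ) := by
    show (starRingEnd ℂ) c₂ * c₂ = ((1 - l : ℝ) : ℂ)
    rw [hc₂, Complex.conj_ofReal, ← Complex.ofReal_mul,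
      Real.mul_self_sqrt (by linarith : (0:ℝ) ≤ 1 - l)]
  have hTT : ∀ (c : ℂ) (X : H →L[ℂ] H),
      star (c • (1 : H →L[ℂ] H)) * X * (c • 1) = (star c * c) • X := by
    intro c X
    rw [star_smul, star_one, smul_mul_assoc, one_mul, mul_smul_comm, mul_one, smul_smul,
      mul_comm c _]
  set T : Fin 2 → (H →L[ℂ] H) := ![c₁ • 1, c₂ • 1] with hT
  set ψ : Fin 2 → (A →ₗ[ℂ] (H →L[ℂ] H)) := ![φ₁, φ₂] with hψ
  have hmem : ∀ i, ψ i ∈ UCPG τ := by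
    intro i; fin_cases i <;> simpa [hψ]
  have hunit : ∀ i, IsUnit (T i) := by
    have key : ∀ c : ℂ, c ≠ 0 → IsUnit (c • (1 : H →L[ℂ] H)) := by
      intro c hc
      exact ⟨⟨c • 1, c⁻¹ • 1,
        by rw [smul_mul_smul_comm, mul_inv_cancel₀ hc, one_mul, one_smul],
        by rw [smul_mul_smul_comm, inv_mul_cancel₀ hc, one_mul, one_smul]⟩, rfl⟩
    intro i; fin_cases i
    · simpa [hT] using key c₁ hc₁0
    · simpa [hT] using key c₂ hc₂0
  have hsum : (∑ i, star (T i) * T i) = 1 := by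
    rw [Fin.sum_univ_two]
    show star (c₁ • (1:H →L[ℂ] H)) * (c₁ • 1) + star (c₂ • (1:H →L[ℂ] H)) * (c₂ • 1) = 1
    have e1 : star (c₁ • (1:H →L[ℂ] H)) * (c₁ • 1) = (l:ℂ) • 1 := by
      rw [show star (c₁ • (1:H →L[ℂ] H)) * (c₁ • 1)
          = star (c₁ • (1:H →L[ℂ] H)) * 1 * (c₁ • 1) by rw [mul_one], hTT, hmul₁]
    have e2 : star (c₂ • (1:H →L[ℂ] H)) * (c₂ • 1) = ((1 - l : ℝ):ℂ) • 1 := by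
      rw [show star (c₂ • (1:H →L[ℂ] H)) * (c₂ • 1)
          = star (c₂ • (1:H →L[ℂ] H)) * 1 * (c₂ • 1) by rw [mul_one], hTT, hmul₂]
    rw [e1, e2, ← add_smul]
    norm_num
  have hdec : ∀ a, φ a = ∑ i, star (T i) * (ψ i a) * T i := by
    intro a
    rw [Fin.sum_univ_two]
    show φ a = star (c₁ • (1:H →L[ℂ] H)) * (φ₁ a) * (c₁ • 1)
        + star (c₂ • (1:H →L[ℂ] H)) * (φ₂ a) * (c₂ • 1)
    rw [hTT, hTT, hmul₁, hmul₂]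
    exact hdecomp a
  have hequiv := hφ.2 2 ψ T hmem hunit hsum hdec
  -- extract unitaries
  obtain ⟨U, hU, hUeq⟩ := hequiv 0
  obtain ⟨V, hV, hVeq⟩ := hequiv 1
  have hUeq' : ∀ a, φ₁ a = star U * φ a * U := by
    intro a; simpa [hψ] using hUeq a
  have hVeq' : ∀ a, φ₂ a = star V * φ a * V := by
    intro a; simpa [hψ] using hVeq a
  -- pointwise argument via an orthonormal basis
  set b := stdOrthonormalBasis ℂ H with hb
  have main : ∀ a : A, φ₁ a = φ a ∧ φ₂ a = φ a := by
    intro a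
    set n := Module.finrank ℂ H with hn
    let x : PiLp 2 (fun _ : Fin n => H) := WithLp.toLp 2 (fun i => φ a (b i))
    let y₁ : PiLp 2 (fun _ : Fin n => H) := WithLp.toLp 2 (fun i => φ₁ a (b i))
    let y₂ : PiLp 2 (fun _ : Fin n => H) := WithLp.toLp 2 (fun i => φ₂ a (b i))
    have hxsum : x = (l:ℂ) • y₁ + ((1 - l : ℝ):ℂ) • y₂ := by
      refine PiLp.ext fun i => ?_
      show φ a (b i) = ((l:ℂ) • y₁ + ((1 - l : ℝ):ℂ) • y₂) i
      have : ((l:ℂ) • y₁ + ((1 - l : ℝ):ℂ) • y₂) i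
          = (l:ℂ) • (φ₁ a (b i)) + ((1 - l : ℝ):ℂ) • (φ₂ a (b i)) := rfl
      rw [this, hdecomp a]
      rfl
    have hnormsq : ∀ z : PiLp 2 (fun _ : Fin n => H), ‖z‖^2 = ∑ i, ‖z i‖^2 :=
      fun z => PiLp.norm_sq_eq_of_L2 _ z
    have hny₁ : ‖y₁‖ = ‖x‖ := by
      have h1 : ‖y₁‖^2 = ‖x‖^2 := by
        rw [hnormsq, hnormsq]
        have : ∀ i, y₁ i = (star U * φ a * U) (b i) := by
          intro i; show φ₁ a (b i) = _; rw [hUeq' a]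
        calc ∑ i, ‖y₁ i‖^2 = ∑ i, ‖(star U * φ a * U) (b i)‖^2 := by
              refine Finset.sum_congr rfl fun i _ => by rw [this i]
          _ = ∑ i, ‖φ a (b i)‖^2 := aux_hs_conj b (φ a) U hU
      nlinarith [norm_nonneg y₁, norm_nonneg x]
    have hny₂ : ‖y₂‖ = ‖x‖ := by
      have h1 : ‖y₂‖^2 = ‖x‖^2 := by
        rw [hnormsq, hnormsq]
        have : ∀ i, y₂ i = (star V * φ a * V) (b i) := by
          intro i; show φ₂ a (b i) = _; rw [hVeq' a]
        calc ∑ i, ‖y₂ i‖^2 = ∑ i, ‖(star V * φ a * V) (b i)‖^2 := by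
              refine Finset.sum_congr rfl fun i _ => by rw [this i]
          _ = ∑ i, ‖φ a (b i)‖^2 := aux_hs_conj b (φ a) V hV
      nlinarith [norm_nonneg y₂, norm_nonneg x]
    obtain ⟨hy₁, hy₂⟩ := aux_convex_forces_eq x y₁ y₂ l hl0 hl1 hxsum hny₁ hny₂
    constructor
    · refine ContinuousLinearMap.coe_injective (b.toBasis.ext fun i => ?_)
      simpa using congrArg (fun z : PiLp 2 (fun _ : Fin n => H) => z i) hy₁
    · refine ContinuousLinearMap.coe_injective (b.toBasis.ext fun i => ?_)
      simpa using congrArg (fun z : PiLp 2 (fun _ : Fin n => H) => z i) hy₂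
  exact ⟨LinearMap.ext fun a => (main a).1, LinearMap.ext fun a => (main a).2⟩
end
end

section
/- Let φ ∈ UCP^{G_τ}(A, B(H)) be pure as an element of CP(A, B(H)) (i.e., any completely positive θ with θ ≤ φ is a scalar multiple of φ). Then φ is a C*-extreme point of UCP^{G_τ}(A, B(H)). -/
open scoped ComplexOrder

noncomputable section

variable {G : Type} [Group G]
variable {A : Type} [Ring A] [StarRing A] [Algebra ℂ A]
variable {H : Type} [NormedAddCommGroup H] [InnerProductSpace ℂ H] [CompleteSpace H]

/-- Conjugation `X ↦ T* X T` as a linear map. -/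
def conjLM (T : H →L[ℂ] H) : (H →L[ℂ] H) →ₗ[ℂ] (H →L[ℂ] H) where
  toFun X := star T * X * T
  map_add' X Y := by noncomm_ring
  map_smul' c X := by simp [mul_smul_comm, smul_mul_assoc]

lemma conjLM_cp (T : H →L[ℂ] H) (ψ : A →ₗ[ℂ] (H →L[ℂ] H)) (hψ : IsCPMap ψ) :
    IsCPMap ((conjLM T) ∘ₗ ψ) := by
  intro n a h
  have key : ∀ (X : H →L[ℂ] H) (v w : H),
      (inner ℂ ((conjLM T X) v) w : ℂ) = inner ℂ (X (T v)) (T w) := by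
    intro X v w
    simp only [conjLM, LinearMap.coe_mk, AddHom.coe_mk, ContinuousLinearMap.mul_apply,
      ContinuousLinearMap.star_eq_adjoint]
    rw [ContinuousLinearMap.adjoint_inner_left]
  simp only [LinearMap.comp_apply, key]
  exact hψ n a (fun k => T (h k))

/-- a `G`-invariant UCP map which is pure as a completely positive map
(any CP map it dominates is a scalar multiple of it) is a C*-extreme point of
`UCP^{G_τ}(A, B(H))`. -/
theorem pure_is_cstarExtreme
    (τ : G → (A ≃⋆ₐ[ℂ] A)) (φ : A →ₗ[ℂ] (H →L[ℂ] H))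
    (hφ : φ ∈ UCPG τ)
    (hpure : ∀ θ : A →ₗ[ℂ] (H →L[ℂ] H), IsCPMap θ → IsCPMap (φ - θ) →
      ∃ t : ℝ, 0 ≤ t ∧ t ≤ 1 ∧ θ = (t : ℂ) • φ) :
    IsCStarExtreme (UCPG τ) φ := by
  refine ⟨hφ, ?_⟩
  intro n ψ T hψS hTunit hTsum hdecomp i
  by_cases hs : Subsingleton (H →L[ℂ] H)
  · exact ⟨1, by simp [Unitary.mem_iff], fun a => Subsingleton.elim _ _⟩
  have : Nontrivial (H →L[ℂ] H) := not_subsingleton_iff_nontrivial.mp hs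
  set θ : Fin n → (A →ₗ[ℂ] (H →L[ℂ] H)) := fun j => (conjLM (T j)) ∘ₗ (ψ j) with hθdef
  have hθCP : ∀ j, IsCPMap (θ j) := fun j => conjLM_cp (T j) (ψ j) (hψS j).1.1
  have hθapp : ∀ j a, θ j a = star (T j) * (ψ j a) * (T j) := fun j a => rfl
  have hφθ : ∀ a, φ a = ∑ j, θ j a := by
    intro a; exact hdecomp a
  have hrest : IsCPMap (φ - θ i) := by
    intro m a h
    have hsplit : ∀ x, (φ - θ i) x = ∑ j ∈ Finset.univ.erase i, θ j x := by
      intro x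
      have := Finset.add_sum_erase Finset.univ (fun j => θ j x) (Finset.mem_univ i)
      rw [LinearMap.sub_apply, hφθ x, ← this]
      abel
    calc (0:ℂ) ≤ ∑ j ∈ Finset.univ.erase i,
          ∑ k, ∑ l, (inner ℂ ((θ j (star (a k) * a l)) (h l)) (h k) : ℂ) := by
            exact Finset.sum_nonneg (fun j _ => hθCP j m a h)
      _ = ∑ k, ∑ l, (inner ℂ (((φ - θ i) (star (a k) * a l)) (h l)) (h k) : ℂ) := by
            simp only [hsplit, ContinuousLinearMap.sum_apply, sum_inner]
            rw [Finset.sum_comm]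
            congr 1; ext k
            rw [Finset.sum_comm]
  obtain ⟨t, ht0, ht1, htθ⟩ := hpure (θ i) (hθCP i) hrest
  have hψ1 : ψ i 1 = 1 := (hψS i).1.2
  have hφ1 : φ 1 = 1 := hφ.1.2
  have key : star (T i) * T i = (t : ℂ) • 1 := by
    have := congrArg (fun f : A →ₗ[ℂ] (H →L[ℂ] H) => f 1) htθ
    simpa [hθapp, hψ1, hφ1] using this
  have htne : t ≠ 0 := by
    intro h0
    have hTT : star (T i) * T i = 0 := by rw [key, h0]; simp
    have hT0 : T i = 0 := by
      have hn : ‖T i‖ * ‖T i‖ = 0 := by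
        rw [← CStarRing.norm_star_mul_self, hTT, norm_zero]
      have := mul_self_eq_zero.mp hn
      exact norm_eq_zero.mp this
    have := hTunit i
    rw [hT0] at this
    exact zero_ne_one (isUnit_zero_iff.mp this)
  have htpos : 0 < t := lt_of_le_of_ne ht0 (Ne.symm htne)
  have htcne : (t : ℂ) ≠ 0 := by exact_mod_cast htne
  -- the flipped identity T T* = t • 1
  obtain ⟨B, hB⟩ := (hTunit i).exists_right_inv
  have key2 : T i * star (T i) = (t : ℂ) • 1 := by
    have h1 : T i * (star (T i) * T i) * B = T i * ((t:ℂ) • (1 : H →L[ℂ] H)) * B := by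
      rw [key]
    calc T i * star (T i) = T i * star (T i) * (T i * B) := by rw [hB]; noncomm_ring
      _ = T i * (star (T i) * T i) * B := by noncomm_ring
      _ = T i * ((t:ℂ) • (1 : H →L[ℂ] H)) * B := h1
      _ = (t:ℂ) • (T i * B) := by
          simp [mul_smul_comm, smul_mul_assoc]
      _ = (t:ℂ) • 1 := by rw [hB]
  set c : ℂ := ((Real.sqrt t : ℝ) : ℂ) with hc
  have hcc : c * c = (t : ℂ) := by
    rw [hc, ← Complex.ofReal_mul, Real.mul_self_sqrt ht0]
  have hcne : c ≠ 0 := by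
    intro h0
    rw [h0, mul_zero] at hcc
    exact htcne hcc.symm
  set U : H →L[ℂ] H := c⁻¹ • star (T i) with hU
  have hstarU : star U = c⁻¹ • T i := by
    rw [hU]
    simp only [star_smul, star_star, star_inv₀]
    congr 1
    rw [hc]
    simp [Complex.star_def, Complex.conj_ofReal]
  refine ⟨U, ?_, ?_⟩
  · rw [Unitary.mem_iff]
    constructor
    · rw [hstarU, hU]
      rw [smul_mul_smul_comm, key2, smul_smul, ← hcc]
      field_simp
      exact one_smul ℂ 1
    · rw [hstarU, hU]
      rw [smul_mul_smul_comm, key, smul_smul, ← hcc]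
      field_simp
      exact one_smul ℂ 1
  · intro a
    have hmain : star (T i) * ψ i a * T i = (t:ℂ) • φ a := by
      have := congrArg (fun f : A →ₗ[ℂ] (H →L[ℂ] H) => f a) htθ
      simpa [hθapp] using this
    have hsq : ((t:ℂ) * (t:ℂ)) • ψ i a = (t:ℂ) • (T i * φ a * star (T i)) := by
      calc ((t:ℂ) * (t:ℂ)) • ψ i a
          = ((t:ℂ) • (1 : H →L[ℂ] H)) * ψ i a * ((t:ℂ) • (1 : H →L[ℂ] H)) := by
            simp [smul_mul_assoc, mul_smul_comm, smul_smul, mul_comm]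
            norm_cast
        _ = (T i * star (T i)) * ψ i a * (T i * star (T i)) := by rw [key2]
        _ = T i * (star (T i) * ψ i a * T i) * star (T i) := by noncomm_ring
        _ = T i * ((t:ℂ) • φ a) * star (T i) := by rw [hmain]
        _ = (t:ℂ) • (T i * φ a * star (T i)) := by
            simp [mul_smul_comm, smul_mul_assoc]
    have hψa : ψ i a = (t:ℂ)⁻¹ • (T i * φ a * star (T i)) := by
      have htt : ((t:ℂ) * (t:ℂ)) ≠ 0 := mul_ne_zero htcne htcne
      have h2 := congrArg (fun Y : H →L[ℂ] H => ((t:ℂ)*(t:ℂ))⁻¹ • Y) hsq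
      simp only [inv_smul_smul₀ htt, smul_smul] at h2
      rw [h2]
      congr 1
      field_simp
    rw [hψa, hstarU, hU]
    simp only [smul_mul_assoc, mul_smul_comm, smul_smul]
    congr 1
    rw [← hcc]
    field_simp
end
end

section
/- Let φ ∈ UCP^{G_τ}(A, B(H)). Then φ is a C*-extreme point of UCP^{G_τ}(A, B(H)) if and only if: for every G-invariant completely positive map ψ : A → B(H) with ψ ≤ φ (i.e., φ − ψ completely positive and G-invariant) such that ψ(1_A) is invertible, there exists an invertible operator Z ∈ B(H) such that ψ(a) = Z* φ(a) Z for all a ∈ A. -/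
open scoped ComplexOrder

noncomputable section

set_option synthInstance.maxHeartbeats 1000000
set_option maxHeartbeats 2000000
set_option linter.unusedSectionVars false

variable {G : Type} [Group G]
variable {A : Type} [Ring A] [StarRing A] [Algebra ℂ A]
variable {H : Type} [NormedAddCommGroup H] [InnerProductSpace ℂ H] [CompleteSpace H]

namespace CSEAux

def conjLM (S : H →L[ℂ] H) (χ : A →ₗ[ℂ] (H →L[ℂ] H)) : A →ₗ[ℂ] (H →L[ℂ] H) where
  toFun a := star S * χ a * S
  map_add' a b := by simp [mul_add, add_mul]
  map_smul' c a := by simp [mul_smul_comm, smul_mul_assoc]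

@[simp] lemma conjLM_apply (S : H →L[ℂ] H) (χ : A →ₗ[ℂ] (H →L[ℂ] H)) (a : A) :
    conjLM S χ a = star S * χ a * S := rfl

lemma conj_inner (S M : H →L[ℂ] H) (x y : H) :
    (inner ℂ ((star S * M * S) x) y : ℂ) = inner ℂ (M (S x)) (S y) := by
  simp [ContinuousLinearMap.mul_apply, ContinuousLinearMap.star_eq_adjoint,
    ContinuousLinearMap.adjoint_inner_left]

lemma conj_cp_sum {χ : A →ₗ[ℂ] (H →L[ℂ] H)} (hχ : IsCPMap χ) (S : H →L[ℂ] H)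
    (n : ℕ) (a : Fin n → A) (h : Fin n → H) :
    0 ≤ ∑ i, ∑ j, (inner ℂ ((star S * χ (star (a i) * a j) * S) (h j)) (h i) : ℂ) := by
  simpa only [conj_inner] using hχ n a (fun k => S (h k))

lemma cp_conj {χ : A →ₗ[ℂ] (H →L[ℂ] H)} (hχ : IsCPMap χ) (S : H →L[ℂ] H) :
    IsCPMap (conjLM S χ) := by
  intro n a h
  simpa only [conjLM_apply] using conj_cp_sum hχ S n a h

lemma nonneg_of_inner {f : H →L[ℂ] H} (hf : ∀ x, 0 ≤ (inner ℂ (f x) x : ℂ)) : 0 ≤ f := by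
  rw [ContinuousLinearMap.nonneg_iff_isPositive, ContinuousLinearMap.isPositive_iff_complex]
  intro x
  obtain ⟨h1, h2⟩ := Complex.nonneg_iff.mp (hf x)
  exact ⟨Complex.ext (by simp) (by simp [← h2]), h1⟩

lemma inner_of_nonneg {f : H →L[ℂ] H} (hf : 0 ≤ f) (x : H) : 0 ≤ (inner ℂ (f x) x : ℂ) := by
  rw [ContinuousLinearMap.nonneg_iff_isPositive, ContinuousLinearMap.isPositive_iff_complex] at hf
  obtain ⟨h1, h2⟩ := hf x
  rw [← h1]
  exact Complex.zero_le_real.mpr h2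

lemma cp_inner_nonneg {φ : A →ₗ[ℂ] (H →L[ℂ] H)} (hφ : IsCPMap φ) (a : A) (x : H) :
    0 ≤ (inner ℂ (φ (star a * a) x) x : ℂ) := by
  simpa using hφ 1 (fun _ => a) (fun _ => x)

lemma cp_one_nonneg {φ : A →ₗ[ℂ] (H →L[ℂ] H)} (hφ : IsCPMap φ) : 0 ≤ φ 1 := by
  refine nonneg_of_inner fun x => ?_
  simpa using cp_inner_nonneg hφ 1 x

lemma cp_add {χ₁ χ₂ : A →ₗ[ℂ] (H →L[ℂ] H)} (h₁ : IsCPMap χ₁) (h₂ : IsCPMap χ₂) :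
    IsCPMap (χ₁ + χ₂) := by
  intro n a h
  have := add_nonneg (h₁ n a h) (h₂ n a h)
  simpa [LinearMap.add_apply, ContinuousLinearMap.add_apply, inner_add_left,
    Finset.sum_add_distrib] using this

lemma cp_smul {χ : A →ₗ[ℂ] (H →L[ℂ] H)} (hχ : IsCPMap χ) {c : ℂ} (hc : 0 ≤ c) :
    IsCPMap (c • χ) := by
  intro n a h
  have hcc : (starRingEnd ℂ) c = c := by
    obtain ⟨h1, h2⟩ := Complex.nonneg_iff.mp hc
    exact Complex.ext (by simp) (by simp [← h2])
  have := mul_nonneg hc (hχ n a h)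
  simpa [LinearMap.smul_apply, ContinuousLinearMap.smul_apply, inner_smul_left, hcc,
    Finset.mul_sum, mul_comm] using this

lemma isUnit_of_mul_self {M : Type*} [Monoid M] {x y : M} (hxx : x * x = y) (hy : IsUnit y) :
    IsUnit x := by
  refine isUnit_iff_exists.mpr ⟨x * ↑hy.unit⁻¹, ?_, ?_⟩
  · rw [← mul_assoc, hxx]; exact hy.mul_val_inv
  · have hc' : Commute x (↑hy.unit⁻¹ : M) := by
      refine Commute.units_inv_right ?_
      rw [hy.unit_spec, ← hxx]
      exact (Commute.refl x).mul_right (Commute.refl x)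
    rw [mul_assoc, ← hc'.eq, ← mul_assoc, hxx]; exact hy.mul_val_inv

lemma isUnit_smul_of_ne_zero {B : Type*} [Ring B] [Algebra ℂ B] {c : ℂ} (hc : c ≠ 0)
    {x : B} (hx : IsUnit x) : IsUnit (c • x) := by
  rw [Algebra.smul_def]
  exact ((isUnit_iff_ne_zero.mpr hc).map (algebraMap ℂ B)).mul hx

lemma inner_self_nonneg' (x : H) : 0 ≤ (inner ℂ x x : ℂ) := by
  rw [(inner_self_eq_norm_sq_to_K (𝕜 := ℂ) x : (inner ℂ x x : ℂ) = (‖x‖ : ℂ) ^ 2)]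
  exact pow_nonneg (Complex.zero_le_real.mpr (norm_nonneg x)) 2

end CSEAux

open CSEAux in
theorem CSEAux.bwd (τ : G → (A ≃⋆ₐ[ℂ] A)) (φ : A →ₗ[ℂ] (H →L[ℂ] H)) (hφ : φ ∈ UCPG τ)
    (hRN : ∀ ψ : A →ₗ[ℂ] (H →L[ℂ] H),
        IsCPMap ψ → IsGInvariant τ ψ →
        IsCPMap (φ - ψ) → IsGInvariant τ (φ - ψ) →
        IsUnit (ψ 1) →
        ∃ Z : H →L[ℂ] H, IsUnit Z ∧ ∀ a : A, ψ a = star Z * φ a * Z) :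
    IsCStarExtreme (UCPG τ) φ := by
  obtain ⟨⟨hφCP, hφ1⟩, hφG⟩ := hφ
  refine ⟨⟨⟨hφCP, hφ1⟩, hφG⟩, ?_⟩
  intro n ψf T hmem hTunit hsum1 hdec i
  set ψ : A →ₗ[ℂ] (H →L[ℂ] H) := conjLM (T i) (ψf i) with hψdef
  have hψCP : IsCPMap ψ := cp_conj (hmem i).1.1 (T i)
  have hψG : IsGInvariant τ ψ := by
    intro g a
    simp only [hψdef, conjLM_apply, (hmem i).2 g a]
  -- the complement decomposition
  have hrest : ∀ x : A, (φ - ψ) x = ∑ j ∈ Finset.univ.erase i, star (T j) * ψf j x * T j := by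
    intro x
    have h1 := hdec x
    have h2 : star (T i) * ψf i x * T i + ∑ j ∈ Finset.univ.erase i, star (T j) * ψf j x * T j
        = ∑ j, star (T j) * ψf j x * T j :=
      Finset.add_sum_erase Finset.univ (fun j => star (T j) * ψf j x * T j) (Finset.mem_univ i)
    simp only [LinearMap.sub_apply, hψdef, conjLM_apply]
    rw [h1, ← h2]
    abel
  have hdCP : IsCPMap (φ - ψ) := by
    intro m a h
    have key : ∀ k l : Fin m, (inner ℂ ((φ - ψ) (star (a k) * a l) (h l)) (h k) : ℂ)
        = ∑ j ∈ Finset.univ.erase i,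
            (inner ℂ ((star (T j) * ψf j (star (a k) * a l) * T j) (h l)) (h k) : ℂ) := by
      intro k l
      rw [hrest (star (a k) * a l)]
      simp [ContinuousLinearMap.sum_apply, sum_inner, inner_sub_left]
    have hswap : ∑ k, ∑ l, (inner ℂ ((φ - ψ) (star (a k) * a l) (h l)) (h k) : ℂ)
        = ∑ j ∈ Finset.univ.erase i, ∑ k, ∑ l,
            (inner ℂ ((star (T j) * ψf j (star (a k) * a l) * T j) (h l)) (h k) : ℂ) := by
      calc ∑ k, ∑ l, (inner ℂ ((φ - ψ) (star (a k) * a l) (h l)) (h k) : ℂ)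
          = ∑ k, ∑ l, ∑ j ∈ Finset.univ.erase i,
              (inner ℂ ((star (T j) * ψf j (star (a k) * a l) * T j) (h l)) (h k) : ℂ) := by
            simp only [key]
        _ = ∑ k, ∑ j ∈ Finset.univ.erase i, ∑ l,
              (inner ℂ ((star (T j) * ψf j (star (a k) * a l) * T j) (h l)) (h k) : ℂ) :=
            Finset.sum_congr rfl fun k _ => Finset.sum_comm
        _ = ∑ j ∈ Finset.univ.erase i, ∑ k, ∑ l,
              (inner ℂ ((star (T j) * ψf j (star (a k) * a l) * T j) (h l)) (h k) : ℂ) :=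
            Finset.sum_comm
    rw [hswap]
    refine Finset.sum_nonneg fun j _ => ?_
    exact conj_cp_sum (hmem j).1.1 (T j) m a h
  have hdG : IsGInvariant τ (φ - ψ) := by
    intro g a
    simp only [LinearMap.sub_apply, hφG g a, hψG g a]
  have hψ1unit : IsUnit (ψ 1) := by
    have : ψ 1 = star (T i) * T i := by
      simp [hψdef, (hmem i).1.2]
    rw [this]
    exact ((hTunit i).star).mul (hTunit i)
  obtain ⟨Z, hZunit, hZ⟩ := hRN ψ hψCP hψG hdCP hdG hψ1unit
  -- now extract unitary
  set t := (hTunit i).unit with ht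
  set V : H →L[ℂ] H := Z * ↑t⁻¹ with hV
  have hTt : (T i) = ↑t := ((hTunit i).unit_spec).symm
  have hVeq : ∀ a, ψf i a = star V * φ a * V := by
    intro a
    have h1 : star (T i) * ψf i a * T i = star Z * φ a * Z := by
      rw [← hZ a]; rfl
    have h2 : star V * φ a * V = star (↑t⁻¹ : H →L[ℂ] H) * (star Z * φ a * Z) * ↑t⁻¹ := by
      simp [hV, star_mul, mul_assoc]
    rw [h2, ← h1, hTt]
    simp only [mul_assoc]
    rw [Units.mul_inv, mul_one, ← mul_assoc, ← star_mul, Units.mul_inv, star_one, one_mul]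
  have hstarVV : star V * V = 1 := by
    have := hVeq 1
    rw [(hmem i).1.2, hφ1, mul_one] at this
    exact this.symm
  have hVunit : IsUnit V := hZunit.mul (t⁻¹).isUnit
  have hVstar : V * star V = 1 := by
    have hsv : star V = ↑hVunit.unit⁻¹ := left_inv_eq_right_inv hstarVV hVunit.mul_val_inv
    rw [hsv]
    exact hVunit.mul_val_inv
  exact ⟨V, Unitary.mem_iff.mpr ⟨hstarVV, hVstar⟩, hVeq⟩


open CSEAux in
theorem CSEAux.fwd (τ : G → (A ≃⋆ₐ[ℂ] A)) (φ : A →ₗ[ℂ] (H →L[ℂ] H)) (hφ : φ ∈ UCPG τ)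
    (hext : IsCStarExtreme (UCPG τ) φ) :
    ∀ ψ : A →ₗ[ℂ] (H →L[ℂ] H),
        IsCPMap ψ → IsGInvariant τ ψ →
        IsCPMap (φ - ψ) → IsGInvariant τ (φ - ψ) →
        IsUnit (ψ 1) →
        ∃ Z : H →L[ℂ] H, IsUnit Z ∧ ∀ a : A, ψ a = star Z * φ a * Z := by
  obtain ⟨⟨hφCP, hφ1⟩, hφG⟩ := hφ
  intro ψ hψCP hψG hdCP hdG hψ1unit
  -- basic positivity facts
  have hψ1nonneg : 0 ≤ ψ 1 := cp_one_nonneg hψCP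
  have h1subψ : 0 ≤ 1 - ψ 1 := by
    have := cp_one_nonneg hdCP
    rwa [LinearMap.sub_apply, hφ1] at this
  have hs : ∀ x : H, 0 ≤ (inner ℂ (ψ 1 x) x : ℂ) := inner_of_nonneg hψ1nonneg
  have ht : ∀ x : H, 0 ≤ (inner ℂ x x - inner ℂ (ψ 1 x) x : ℂ) := by
    intro x
    have := inner_of_nonneg h1subψ x
    simpa [ContinuousLinearMap.sub_apply, inner_sub_left] using this
  have h2nn : (0:ℂ) ≤ 2⁻¹ := by
    rw [Complex.nonneg_iff]; norm_num
  set p : H →L[ℂ] H := (2⁻¹ : ℂ) • ψ 1 with hp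
  set q : H →L[ℂ] H := 1 - p with hq
  have hpx : ∀ x : H, (inner ℂ (p x) x : ℂ) = 2⁻¹ * inner ℂ (ψ 1 x) x := by
    intro x
    simp [hp, ContinuousLinearMap.smul_apply, inner_smul_left, Complex.ext_iff, mul_comm]
  have hpnonneg : 0 ≤ p := nonneg_of_inner fun x => by
    rw [hpx x]; exact mul_nonneg h2nn (hs x)
  have hqx : ∀ x : H, (inner ℂ (q x) x : ℂ) = inner ℂ x x - 2⁻¹ * inner ℂ (ψ 1 x) x := by
    intro x
    simp [hq, ContinuousLinearMap.sub_apply, inner_sub_left, hpx x]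
  have hqnonneg : 0 ≤ q := nonneg_of_inner fun x => by
    rw [hqx x]
    have h3 : (0:ℂ) ≤ (inner ℂ x x - inner ℂ (ψ 1 x) x) + 2⁻¹ * inner ℂ (ψ 1 x) x :=
      add_nonneg (ht x) (mul_nonneg h2nn (hs x))
    have h4 : ((inner ℂ x x : ℂ) - inner ℂ (ψ 1 x) x) + 2⁻¹ * inner ℂ (ψ 1 x) x
        = (inner ℂ x x : ℂ) - 2⁻¹ * inner ℂ (ψ 1 x) x := by ring
    rwa [h4] at h3
  -- invertibility of p and q
  have hp_unit : IsUnit p := isUnit_smul_of_ne_zero (by norm_num) hψ1unit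
  have ha_unit : IsUnit ((2⁻¹ : ℂ) • (1 : H →L[ℂ] H)) :=
    isUnit_smul_of_ne_zero (by norm_num) isUnit_one
  have ha_nonneg : 0 ≤ ((2⁻¹ : ℂ) • (1 : H →L[ℂ] H)) := nonneg_of_inner fun x => by
    have : (inner ℂ (((2⁻¹ : ℂ) • (1 : H →L[ℂ] H)) x) x : ℂ) = 2⁻¹ * inner ℂ x x := by
      simp [ContinuousLinearMap.smul_apply, inner_smul_left, Complex.ext_iff, mul_comm]
    rw [this]
    exact mul_nonneg h2nn (inner_self_nonneg' x)
  have ha_le : ((2⁻¹ : ℂ) • (1 : H →L[ℂ] H)) ≤ q := by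
    rw [← sub_nonneg]
    refine nonneg_of_inner fun x => ?_
    have h5 : (inner ℂ ((q - (2⁻¹ : ℂ) • (1 : H →L[ℂ] H)) x) x : ℂ)
        = 2⁻¹ * (inner ℂ x x - inner ℂ (ψ 1 x) x) := by
      simp only [ContinuousLinearMap.sub_apply, inner_sub_left, hqx x,
        ContinuousLinearMap.smul_apply, inner_smul_left, ContinuousLinearMap.one_apply]
      have : (starRingEnd ℂ) (2⁻¹ : ℂ) = 2⁻¹ := by
        simp [Complex.ext_iff]
      rw [this]; ring
    rw [h5]
    exact mul_nonneg h2nn (ht x)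
  have hq_unit : IsUnit q := CStarAlgebra.isUnit_of_le _ ha_le (IsStrictlyPositive.iff_of_unital.mpr ⟨ha_nonneg, ha_unit⟩)
  -- square roots
  set T₁ : H →L[ℂ] H := CFC.sqrt p with hT₁def
  set T₂ : H →L[ℂ] H := CFC.sqrt q with hT₂def
  have hT₁sq : T₁ * T₁ = p := CFC.sqrt_mul_sqrt_self p hpnonneg
  have hT₂sq : T₂ * T₂ = q := CFC.sqrt_mul_sqrt_self q hqnonneg
  have hT₁sa : star T₁ = T₁ := (IsSelfAdjoint.of_nonneg (CFC.sqrt_nonneg (a := p))).star_eq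
  have hT₂sa : star T₂ = T₂ := (IsSelfAdjoint.of_nonneg (CFC.sqrt_nonneg (a := q))).star_eq
  have hT₁unit : IsUnit T₁ := isUnit_of_mul_self hT₁sq hp_unit
  have hT₂unit : IsUnit T₂ := isUnit_of_mul_self hT₂sq hq_unit
  set S₁ : H →L[ℂ] H := ↑hT₁unit.unit⁻¹ with hS₁def
  set S₂ : H →L[ℂ] H := ↑hT₂unit.unit⁻¹ with hS₂def
  have h11 : T₁ * S₁ = 1 := hT₁unit.mul_val_inv
  have h11' : S₁ * T₁ = 1 := hT₁unit.val_inv_mul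
  have h22 : T₂ * S₂ = 1 := hT₂unit.mul_val_inv
  have h22' : S₂ * T₂ = 1 := hT₂unit.val_inv_mul
  have hS₁sa : star S₁ = S₁ := by
    refine left_inv_eq_right_inv ?_ h11
    rw [← hT₁sa, ← star_mul, h11, star_one]
  have hS₂sa : star S₂ = S₂ := by
    refine left_inv_eq_right_inv ?_ h22
    rw [← hT₂sa, ← star_mul, h22, star_one]
  -- the two components
  set ψ' : A →ₗ[ℂ] (H →L[ℂ] H) := (2⁻¹ : ℂ) • ψ with hψ'def
  set ρ : A →ₗ[ℂ] (H →L[ℂ] H) := φ - ψ' with hρdef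
  have hψ'CP : IsCPMap ψ' := cp_smul hψCP h2nn
  have hρeq : ρ = (φ - ψ) + ψ' := by
    rw [hρdef, hψ'def]
    module
  have hρCP : IsCPMap ρ := hρeq ▸ cp_add hdCP hψ'CP
  set φ₁ : A →ₗ[ℂ] (H →L[ℂ] H) := conjLM S₁ ψ' with hφ₁def
  set φ₂ : A →ₗ[ℂ] (H →L[ℂ] H) := conjLM S₂ ρ with hφ₂def
  have hψ'1 : ψ' 1 = p := by simp [hψ'def, hp]
  have hρ1 : ρ 1 = q := by simp [hρdef, hψ'1, hφ1, hq]
  have hφ₁mem : φ₁ ∈ UCPG τ := by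
    refine ⟨⟨cp_conj hψ'CP S₁, ?_⟩, ?_⟩
    · rw [hφ₁def]
      simp only [conjLM_apply, hψ'1, hS₁sa, ← hT₁sq]
      calc S₁ * (T₁ * T₁) * S₁ = (S₁ * T₁) * (T₁ * S₁) := by simp only [mul_assoc]
        _ = 1 := by rw [h11', h11, one_mul]
    · intro g a
      simp only [hφ₁def, conjLM_apply, hψ'def, LinearMap.smul_apply, hψG g a]
  have hφ₂mem : φ₂ ∈ UCPG τ := by
    refine ⟨⟨cp_conj hρCP S₂, ?_⟩, ?_⟩
    · rw [hφ₂def]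
      simp only [conjLM_apply, hρ1, hS₂sa, ← hT₂sq]
      calc S₂ * (T₂ * T₂) * S₂ = (S₂ * T₂) * (T₂ * S₂) := by simp only [mul_assoc]
        _ = 1 := by rw [h22', h22, one_mul]
    · intro g a
      simp only [hφ₂def, conjLM_apply, hρdef, hψ'def, LinearMap.sub_apply,
        LinearMap.smul_apply, hψG g a, hφG g a]
  have hcollapse₁ : ∀ X : H →L[ℂ] H, T₁ * (S₁ * X * S₁) * T₁ = X := by
    intro X
    calc T₁ * (S₁ * X * S₁) * T₁ = (T₁ * S₁) * X * (S₁ * T₁) := by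
          simp only [mul_assoc]
      _ = X := by rw [h11, h11', one_mul, mul_one]
  have hcollapse₂ : ∀ X : H →L[ℂ] H, T₂ * (S₂ * X * S₂) * T₂ = X := by
    intro X
    calc T₂ * (S₂ * X * S₂) * T₂ = (T₂ * S₂) * X * (S₂ * T₂) := by
          simp only [mul_assoc]
      _ = X := by rw [h22, h22', one_mul, mul_one]
  have hdec : ∀ a : A, φ a = ∑ i : Fin 2,
      star (![T₁, T₂] i) * ((![φ₁, φ₂] i) a) * (![T₁, T₂] i) := by
    intro a
    rw [Fin.sum_univ_two]
    simp only [Matrix.cons_val_zero, Matrix.cons_val_one, Matrix.head_cons, hT₁sa, hT₂sa,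
      hφ₁def, hφ₂def, conjLM_apply, hS₁sa, hS₂sa, hcollapse₁, hcollapse₂]
    simp only [hρdef, LinearMap.sub_apply]
    abel
  have hsum1 : (∑ i : Fin 2, star (![T₁, T₂] i) * (![T₁, T₂] i)) = 1 := by
    rw [Fin.sum_univ_two]
    simp only [Matrix.cons_val_zero, Matrix.cons_val_one, Matrix.head_cons, hT₁sa, hT₂sa,
      hT₁sq, hT₂sq, hq]
    abel
  have hTunit : ∀ i : Fin 2, IsUnit (![T₁, T₂] i) := by
    intro i
    fin_cases i
    · simpa using hT₁unit
    · simpa using hT₂unit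
  have hmem : ∀ i : Fin 2, (![φ₁, φ₂] i) ∈ UCPG τ := by
    intro i
    fin_cases i
    · simpa using hφ₁mem
    · simpa using hφ₂mem
  have hUE := hext.2 2 ![φ₁, φ₂] ![T₁, T₂] hmem hTunit hsum1 hdec 0
  simp only [Matrix.cons_val_zero] at hUE
  obtain ⟨U, hUmem, hUeq⟩ := hUE
  -- assemble Z
  set c : ℂ := ((Real.sqrt 2 : ℝ) : ℂ) with hc
  have hcconj : star c = c := by
    rw [Complex.star_def]; exact Complex.conj_ofReal _
  have hcc : c * c = 2 := by
    rw [hc, ← Complex.ofReal_mul, Real.mul_self_sqrt (by norm_num)]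
    norm_num
  have hcne : c ≠ 0 := by
    rw [hc]
    simp only [ne_eq, Complex.ofReal_eq_zero]
    exact ne_of_gt (Real.sqrt_pos.mpr (by norm_num))
  have hUunit : IsUnit U := by
    obtain ⟨hu1, hu2⟩ := Unitary.mem_iff.mp hUmem
    exact isUnit_iff_exists.mpr ⟨star U, hu2, hu1⟩
  refine ⟨c • (U * T₁), isUnit_smul_of_ne_zero hcne (hUunit.mul hT₁unit), ?_⟩
  intro a
  have hkey : T₁ * (star U * φ a * U) * T₁ = ψ' a := by
    rw [← hUeq a, hφ₁def]
    simp only [conjLM_apply, hS₁sa]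
    exact hcollapse₁ (ψ' a)
  have : star (c • (U * T₁)) * φ a * (c • (U * T₁))
      = (c * c) • (T₁ * (star U * φ a * U) * T₁) := by
    rw [star_smul, hcconj, star_mul, hT₁sa]
    rw [smul_mul_assoc, smul_mul_assoc, mul_smul_comm, smul_smul]
    simp only [mul_assoc]
  rw [this, hkey, hcc, hψ'def]
  simp [smul_smul]


/-- `φ ∈ UCP^{G_τ}(A, B(H))` is a C*-extreme point iff every
`G`-invariant completely positive map `ψ ≤ φ` with `ψ(1)` invertible is of the form
`ψ = Z* φ Z` for an invertible `Z ∈ B(H)`. -/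
theorem cstarExtreme_iff_radonNikodym
    (τ : G → (A ≃⋆ₐ[ℂ] A)) (φ : A →ₗ[ℂ] (H →L[ℂ] H)) (hφ : φ ∈ UCPG τ) :
    IsCStarExtreme (UCPG τ) φ ↔
      ∀ ψ : A →ₗ[ℂ] (H →L[ℂ] H),
        IsCPMap ψ → IsGInvariant τ ψ →
        IsCPMap (φ - ψ) → IsGInvariant τ (φ - ψ) →
        IsUnit (ψ 1) →
        ∃ Z : H →L[ℂ] H, IsUnit Z ∧ ∀ a : A, ψ a = star Z * φ a * Z := by
  constructor
  · exact fun hext => CSEAux.fwd τ φ hφ hext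
  · exact fun hRN => CSEAux.bwd τ φ hφ hRN
end
end

section
/- Let φ ∈ UCP^{G_τ}(A, B(H)) with minimal Stinespring representation (π, V, K), associated unitary representation U_φ of G on K, and suppose the projection VV* commutes with every element of the commutant (π(A) ∪ U_φ(G))'. Given invertible T ∈ B(H) and S ∈ (π(A)∪U_φ(G))' with 0 ≤ S ≤ Id_K and T*ψ(a)T = V*π(a)SV for a UCP map ψ and all a ∈ A, define R := V*S^{1/2}V. Then VR = S^{1/2}V, R = (T*T)^{1/2}, R is invertible, and ψ(a) = (RT^{-1})* φ(a) (RT^{-1}) with RT^{-1} unitary. -/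
open scoped ComplexOrder

noncomputable section

variable {G : Type} [Group G]
variable {A : Type} [Ring A] [StarRing A] [Algebra ℂ A]
variable {H : Type} [NormedAddCommGroup H] [InnerProductSpace ℂ H] [CompleteSpace H]

set_option synthInstance.maxHeartbeats 400000

variable {K : Type} [NormedAddCommGroup K] [InnerProductSpace ℂ K] [CompleteSpace K]


section AuxLemmas

variable {K : Type} [NormedAddCommGroup K] [InnerProductSpace ℂ K] [CompleteSpace K]

lemma commute_of_mem_elemental' {X a y : K →L[ℂ] K} (h : Commute X a) (h' : Commute X (star a))
    (hy : y ∈ StarAlgebra.elemental ℂ a) : Commute X y := by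
  induction hy using StarAlgebra.elemental.induction_on with
  | self => exact h
  | star_self => exact h'
  | algebraMap r => exact Algebra.commute_algebraMap_right r X
  | add u hu v hv hu' hv' => exact hu'.add_right hv'
  | mul u hu v hv hu' hv' => exact hu'.mul_right hv'
  | closure s hs hcomm v hv =>
      have hcl : IsClosed {u : K →L[ℂ] K | X * u = u * X} :=
        isClosed_eq (continuous_mul_left X) (continuous_mul_right X)
      exact hcl.closure_subset_iff.mpr (fun u hu => hcomm u hu) hv

lemma cfc_mem_elemental' (f : ℂ → ℂ) (a : K →L[ℂ] K) :
    cfc f a ∈ StarAlgebra.elemental ℂ a := by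
  refine cfc_cases (· ∈ StarAlgebra.elemental ℂ a) a f (zero_mem _) fun hf ha => ?_
  have : IsStarNormal a := ha
  rw [cfcHom_eq_of_isStarNormal]
  exact SetLike.coe_mem _

lemma commute_cfc_sqrt' {X S : K →L[ℂ] K} (hS0 : 0 ≤ S) (h : Commute X S) :
    Commute X (CFC.sqrt S) := by
  have hsa : IsSelfAdjoint S := .of_nonneg hS0
  have h' : Commute X (star S) := by rw [hsa.star_eq]; exact h
  rw [CFC.sqrt_eq_cfc, cfc_nnreal_eq_real _ S hS0, cfc_real_eq_complex _ hsa]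
  exact commute_of_mem_elemental' h h' (cfc_mem_elemental' _ S)

end AuxLemmas

set_option maxHeartbeats 1000000

/-- `(π, V, K)` is a minimal Stinespring representation of `φ`. -/
def IsMinimalStinespring (φ : A →ₗ[ℂ] (H →L[ℂ] H))
    (π : A →⋆ₐ[ℂ] (K →L[ℂ] K)) (V : H →L[ℂ] K) : Prop :=
  (∀ h : H, ‖V h‖ = ‖h‖) ∧
  (∀ a : A, φ a = (ContinuousLinearMap.adjoint V).comp ((π a).comp V)) ∧
  (Submodule.span ℂ {x : K | ∃ (a : A) (h : H), x = π a (V h)}).topologicalClosure = ⊤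

/-- The commutant of a set of operators. -/
def commutant (s : Set (K →L[ℂ] K)) : Set (K →L[ℂ] K) :=
  {T : K →L[ℂ] K | ∀ x ∈ s, T * x = x * T}

/-- under the assumption that `VV*` commutes with the commutant
`(π(A) ∪ U_φ(G))'`, given invertible `T`, `0 ≤ S ≤ 1` in the commutant and a UCP map
`ψ` with `T*ψ(a)T = V*π(a)SV`, the operator `R := V*S^{1/2}V` satisfies
`VR = S^{1/2}V`, `R = (T*T)^{1/2}`, `R` is invertible, `RT⁻¹` is unitary and
`ψ(a) = (RT⁻¹)* φ(a) (RT⁻¹)`. -/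
theorem radonNikodym_component_computation
    (τ : G → (A ≃⋆ₐ[ℂ] A)) (φ : A →ₗ[ℂ] (H →L[ℂ] H)) (hφ : φ ∈ UCPG τ)
    (π : A →⋆ₐ[ℂ] (K →L[ℂ] K)) (V : H →L[ℂ] K)
    (hmin : IsMinimalStinespring φ π V)
    (U : G → (K →L[ℂ] K))
    (hUuni : ∀ g, U g ∈ unitary (K →L[ℂ] K))
    (hUV : ∀ g, (U g).comp V = V)
    (hUπ : ∀ (g : G) (a : A), U g * π a * star (U g) = π (τ g a))
    (hcomm : ∀ X ∈ commutant (Set.range (fun a : A => π a) ∪ Set.range U),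
      (V.comp (ContinuousLinearMap.adjoint V)) * X = X * (V.comp (ContinuousLinearMap.adjoint V)))
    (T : H →L[ℂ] H) (hT : IsUnit T)
    (S : K →L[ℂ] K)
    (hS : S ∈ commutant (Set.range (fun a : A => π a) ∪ Set.range U))
    (hS0 : 0 ≤ S) (hS1 : S ≤ 1)
    (ψ : A →ₗ[ℂ] (H →L[ℂ] H)) (hψ : IsUCPMap ψ)
    (heq : ∀ a : A, star T * ψ a * T =
      (ContinuousLinearMap.adjoint V).comp (((π a) * S).comp V)) :
    V.comp ((ContinuousLinearMap.adjoint V).comp ((CFC.sqrt S).comp V)) =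
      (CFC.sqrt S).comp V ∧
    (ContinuousLinearMap.adjoint V).comp ((CFC.sqrt S).comp V) = CFC.sqrt (star T * T) ∧
    IsUnit ((ContinuousLinearMap.adjoint V).comp ((CFC.sqrt S).comp V)) ∧
    ((ContinuousLinearMap.adjoint V).comp ((CFC.sqrt S).comp V)) * Ring.inverse T ∈
      unitary (H →L[ℂ] H) ∧
    ∀ a : A, ψ a =
      star (((ContinuousLinearMap.adjoint V).comp ((CFC.sqrt S).comp V)) * Ring.inverse T) *
        φ a *
        (((ContinuousLinearMap.adjoint V).comp ((CFC.sqrt S).comp V)) * Ring.inverse T) := by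
  set V' := ContinuousLinearMap.adjoint V with hV'
  have hV1 : V'.comp V = 1 := (V.norm_map_iff_adjoint_comp_self).mp hmin.1
  have hV1' : ∀ x : H, V' (V x) = x := fun x => DFunLike.congr_fun hV1 x
  set Sq := CFC.sqrt S with hSqdef
  set R : H →L[ℂ] H := V'.comp (Sq.comp V) with hRdef
  have hφπ : ∀ a, φ a = V'.comp ((π a).comp V) := hmin.2.1
  have hSπ : ∀ a : A, S * π a = π a * S := fun a => hS (π a) (Or.inl ⟨a, rfl⟩)
  have hSQ : (V.comp V') * S = S * (V.comp V') := hcomm S hS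
  -- commutation facts
  have hQSq : Commute (V.comp V') Sq := commute_cfc_sqrt' hS0 hSQ
  have hQSq' : ∀ y : K, V (V' (Sq y)) = Sq (V (V' y)) := by
    intro y
    have := DFunLike.congr_fun hQSq.eq y
    simpa [ContinuousLinearMap.mul_apply] using this
  have hπSq : ∀ a, Commute (π a) Sq := fun a => commute_cfc_sqrt' hS0 (hSπ a).symm
  -- claim 1
  have claim1 : V.comp (V'.comp (Sq.comp V)) = Sq.comp V := by
    ext x
    simp only [ContinuousLinearMap.comp_apply]
    rw [hQSq' (V x), hV1' x]
  have claim1' : ∀ x : H, V (R x) = Sq (V x) := fun x => DFunLike.congr_fun claim1 x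
  -- sqrt multiplication
  have hSqSq : ∀ y : K, Sq (Sq y) = S y := by
    intro y
    have := DFunLike.congr_fun (CFC.sqrt_mul_sqrt_self S hS0) y
    simpa [ContinuousLinearMap.mul_apply] using this
  -- T*T
  have hTT : star T * T = V'.comp (S.comp V) := by
    have h := heq 1
    rw [hψ.2, map_one, mul_one, one_mul] at h
    exact h
  -- claim 2 : R * R = star T * T
  have claim2 : R * R = star T * T := by
    rw [hTT]
    ext x
    simp only [ContinuousLinearMap.mul_apply, ContinuousLinearMap.comp_apply]
    show V' (Sq (V (R x))) = V' (S (V x))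
    rw [claim1' x, hSqSq]
  -- positivity of R
  have hSq0 : 0 ≤ Sq := CFC.sqrt_nonneg S
  have hR0 : 0 ≤ R := by
    rw [ContinuousLinearMap.nonneg_iff_isPositive]
    have hSqP : Sq.IsPositive := (ContinuousLinearMap.nonneg_iff_isPositive Sq).mp hSq0
    exact hSqP.adjoint_conj V
  have claim3 : R = CFC.sqrt (star T * T) := (CFC.sqrt_unique claim2 hR0).symm
  have hRsa : star R = R := (IsSelfAdjoint.of_nonneg hR0).star_eq
  -- R is a unit
  obtain ⟨u, hu⟩ := (hT.star).mul hT
  have hcRu : Commute R (↑u : H →L[ℂ] H) := by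
    have h1 : Commute R (R * R) := (Commute.refl R).mul_right (Commute.refl R)
    rw [claim2, ← hu] at h1
    exact h1
  have hcRui := (hcRu.units_inv_right).eq
  have hRunit : IsUnit R := by
    refine isUnit_iff_exists.mpr ⟨↑u⁻¹ * R, ?_, ?_⟩
    · rw [← mul_assoc, hcRui, mul_assoc, claim2, ← hu, Units.inv_mul]
    · rw [mul_assoc, claim2, ← hu, Units.inv_mul]
  -- W is unitary
  have hTi : T * Ring.inverse T = 1 := Ring.mul_inverse_cancel T hT
  have hTiL : star (Ring.inverse T) * star T = 1 := by rw [← star_mul, hTi, star_one]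
  have hsWW : star (R * Ring.inverse T) * (R * Ring.inverse T) = 1 := by
    rw [star_mul, hRsa, mul_assoc, ← mul_assoc R R, claim2]
    rw [show star T * T * Ring.inverse T = star T from by rw [mul_assoc, hTi, mul_one]]
    exact hTiL
  have hWu : IsUnit (R * Ring.inverse T) := hRunit.mul (isUnit_ringInverse.mpr hT)
  have hWsW : (R * Ring.inverse T) * star (R * Ring.inverse T) = 1 := by
    set W := R * Ring.inverse T with hW
    obtain ⟨w, hw⟩ := hWu
    have h3 : W * ↑w⁻¹ = 1 := by rw [← hw]; exact w.mul_inv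
    calc W * star W = W * star W * (W * ↑w⁻¹) := by rw [h3, mul_one]
      _ = W * (star W * W) * ↑w⁻¹ := by simp [mul_assoc]
      _ = W * ↑w⁻¹ := by rw [hsWW, mul_one]
      _ = 1 := h3
  have hWmem : R * Ring.inverse T ∈ unitary (H →L[ℂ] H) := Unitary.mem_iff.mpr ⟨hsWW, hWsW⟩
  -- the conjugation identity
  have hQSq'' : ∀ z : K, Sq (V (V' z)) = V (V' (Sq z)) := fun z => (hQSq' z).symm
  have hπSq' : ∀ (a : A) (y : K), Sq (π a y) = π a (Sq y) := by
    intro a y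
    have := DFunLike.congr_fun (hπSq a).eq y
    simpa [ContinuousLinearMap.mul_apply] using this.symm
  have hMid : ∀ a, R * φ a * R = star T * ψ a * T := by
    intro a
    rw [heq a, hφπ a]
    ext x
    simp only [ContinuousLinearMap.mul_apply, ContinuousLinearMap.comp_apply]
    show V' (Sq (V (V' (π a (V (R x)))))) = V' ((π a * S) (V x))
    rw [claim1' x, hQSq'' (π a (Sq (V x))), hV1' (V' (Sq (π a (Sq (V x))))),
      hπSq' a (Sq (V x)), hSqSq (V x)]
    rfl
  have hfinal : ∀ a, ψ a = star (R * Ring.inverse T) * φ a * (R * Ring.inverse T) := by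
    intro a
    symm
    calc star (R * Ring.inverse T) * φ a * (R * Ring.inverse T)
        = star (Ring.inverse T) * (R * φ a * R) * Ring.inverse T := by
          rw [star_mul, hRsa]; simp only [mul_assoc]
      _ = star (Ring.inverse T) * (star T * ψ a * T) * Ring.inverse T := by rw [hMid a]
      _ = star (Ring.inverse T) * star T * ψ a * (T * Ring.inverse T) := by
          simp only [mul_assoc]
      _ = ψ a := by rw [hTiL, hTi, one_mul, mul_one]
  exact ⟨claim1, claim3, hRunit, hWmem, hfinal⟩
end
end
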